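/- Let γ > 1, p(ρ) = ρ^γ, and 0 < r₀ < r₁. Then there exists a constant C > 0 such that for all ρ₊, ρ₋, ρ̃ ∈ [r₀, r₁] with ρ̃ ≠ ρ₊, ρ̃ ≠ ρ₋, and min(ρ₊, ρ₋) ≤ ρ̃ ≤ max(ρ₊, ρ₋), one has |(p(ρ̃) − p(ρ₋))/(ρ̃ − ρ₋) − (p(ρ̃) − p(ρ₊))/(ρ̃ − ρ₊) − (γ(γ−1)/2) ρ₊^{γ−2} (ρ₋ − ρ₊)| ≤ C |ρ₋ − ρ₊|². -/

import Mathlib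

open Set

private lemma abs_sub_le_of_mem_uIcc' {a z x : ℝ} (hx : x ∈ Set.uIcc a z) :
    |x - a| ≤ |z - a| := by
  rcases le_total a z with h | h
  · rw [Set.uIcc_of_le h] at hx
    rw [abs_of_nonneg (by linarith [hx.1]), abs_of_nonneg (by linarith)]
    linarith [hx.2]
  · rw [Set.uIcc_of_ge h] at hx
    rw [abs_of_nonpos (by linarith [hx.2]), abs_of_nonpos (by linarith)]
    linarith [hx.1]

private lemma rpow_le_max {r₀ r₁ x : ℝ} (h₀ : 0 < r₀) (hx : x ∈ Set.Icc r₀ r₁) (c : ℝ) :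
    x ^ c ≤ max (r₀ ^ c) (r₁ ^ c) := by
  rcases le_total 0 c with hc | hc
  · exact le_max_of_le_right (Real.rpow_le_rpow (le_trans h₀.le hx.1) hx.2 hc)
  · exact le_max_of_le_left (Real.rpow_le_rpow_of_nonpos h₀ hx.1 hc)

/-- Lipschitz bound for `x ↦ x ^ c` on `[r₀, r₁]`. -/
private lemma lip_rpow {r₀ r₁ : ℝ} (h₀ : 0 < r₀) (c : ℝ) {x y : ℝ}
    (hx : x ∈ Set.Icc r₀ r₁) (hy : y ∈ Set.Icc r₀ r₁) :
    |x ^ c - y ^ c| ≤ (|c| * max (r₀ ^ (c - 1)) (r₁ ^ (c - 1))) * |x - y| := by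
  have hconv : Convex ℝ (Set.Icc r₀ r₁) := convex_Icc _ _
  have hmv := hconv.norm_image_sub_le_of_norm_hasDerivWithin_le
    (f := fun t => t ^ c) (f' := fun t => c * t ^ (c - 1))
    (fun t ht => (Real.hasDerivAt_rpow_const (Or.inl (ne_of_gt (lt_of_lt_of_le h₀ ht.1)))).hasDerivWithinAt)
    (fun t ht => by
      have h1 : t ^ (c - 1) ≤ max (r₀ ^ (c - 1)) (r₁ ^ (c - 1)) := rpow_le_max h₀ ht (c - 1)
      have h2 : (0:ℝ) ≤ t ^ (c - 1) := Real.rpow_nonneg (le_trans h₀.le ht.1) _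
      rw [Real.norm_eq_abs, abs_mul, abs_of_nonneg h2]
      exact mul_le_mul_of_nonneg_left h1 (abs_nonneg c))
    hy hx
  simpa [Real.norm_eq_abs] using hmv

/-- First-order Taylor bound for `z ↦ γ * z ^ (γ-1)` around `a`. -/
private lemma taylor1 {γ r₀ r₁ : ℝ} (hγ : 1 < γ) (h₀ : 0 < r₀) {a z : ℝ}
    (ha : a ∈ Set.Icc r₀ r₁) (hz : z ∈ Set.Icc r₀ r₁) :
    |γ * z ^ (γ - 1) - γ * a ^ (γ - 1) - γ * (γ - 1) * a ^ (γ - 2) * (z - a)|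
      ≤ γ * (γ - 1) * (|γ - 2| * max (r₀ ^ (γ - 3)) (r₁ ^ (γ - 3))) * (z - a) ^ 2 := by
  set K : ℝ := |γ - 2| * max (r₀ ^ (γ - 3)) (r₁ ^ (γ - 3)) with hK
  have hsub : Set.uIcc a z ⊆ Set.Icc r₀ r₁ := Set.uIcc_subset_Icc ha hz
  have hconv : Convex ℝ (Set.uIcc a z) := convex_uIcc _ _
  have hmv := hconv.norm_image_sub_le_of_norm_hasDerivWithin_le
    (f := fun t => γ * t ^ (γ - 1) - γ * (γ - 1) * a ^ (γ - 2) * t)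
    (f' := fun t => γ * ((γ - 1) * t ^ (γ - 1 - 1)) - γ * (γ - 1) * a ^ (γ - 2))
    (C := γ * (γ - 1) * K * |z - a|)
    (fun t ht => by
      have htpos : (0:ℝ) < t := lt_of_lt_of_le h₀ (hsub ht).1
      have hlin : HasDerivAt (fun t : ℝ => γ * (γ - 1) * a ^ (γ - 2) * t)
          (γ * (γ - 1) * a ^ (γ - 2)) t := by
        simpa using (hasDerivAt_id t).const_mul (γ * (γ - 1) * a ^ (γ - 2))
      exact (((Real.hasDerivAt_rpow_const (p := γ - 1) (Or.inl htpos.ne')).const_mul γ).sub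
        hlin).hasDerivWithinAt)
    (fun t ht => by
      have h1 : |t ^ (γ - 2) - a ^ (γ - 2)| ≤ (|γ - 2| * max (r₀ ^ (γ - 2 - 1)) (r₁ ^ (γ - 2 - 1))) * |t - a| :=
        lip_rpow h₀ (γ - 2) (hsub ht) ha
      have h2 : |t - a| ≤ |z - a| := abs_sub_le_of_mem_uIcc' ht
      have h3 : γ * ((γ - 1) * t ^ (γ - 1 - 1)) - γ * (γ - 1) * a ^ (γ - 2)
          = γ * (γ - 1) * (t ^ (γ - 2) - a ^ (γ - 2)) := by
        have : γ - 1 - 1 = γ - 2 := by ring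
        rw [this]; ring
      have hγγ : (0:ℝ) ≤ γ * (γ - 1) := by nlinarith
      simp only [Real.norm_eq_abs]
      rw [h3, abs_mul, abs_of_nonneg hγγ]
      have h32 : γ - 2 - 1 = γ - 3 := by ring
      rw [h32] at h1
      calc γ * (γ - 1) * |t ^ (γ - 2) - a ^ (γ - 2)|
          ≤ γ * (γ - 1) * (K * |t - a|) := by
            exact mul_le_mul_of_nonneg_left h1 hγγ
        _ ≤ γ * (γ - 1) * K * |z - a| := by
            have hKnn : 0 ≤ K := by positivity
            rw [mul_assoc (γ * (γ - 1))]
            exact mul_le_mul_of_nonneg_left (mul_le_mul_of_nonneg_left h2 hKnn)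
              hγγ
        )
    Set.left_mem_uIcc Set.right_mem_uIcc
  simp only [Real.norm_eq_abs] at hmv
  have heq : (γ * z ^ (γ - 1) - γ * (γ - 1) * a ^ (γ - 2) * z)
      - (γ * a ^ (γ - 1) - γ * (γ - 1) * a ^ (γ - 2) * a)
      = γ * z ^ (γ - 1) - γ * a ^ (γ - 1) - γ * (γ - 1) * a ^ (γ - 2) * (z - a) := by ring
  rw [heq] at hmv
  calc |γ * z ^ (γ - 1) - γ * a ^ (γ - 1) - γ * (γ - 1) * a ^ (γ - 2) * (z - a)|
      ≤ γ * (γ - 1) * K * |z - a| * |z - a| := hmv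
    _ = γ * (γ - 1) * K * (z - a) ^ 2 := by
        rw [mul_assoc, ← abs_mul, ← sq, abs_of_nonneg (sq_nonneg _)]

theorem divided_difference_taylor (γ : ℝ) (hγ : 1 < γ)
    (r₀ r₁ : ℝ) (h₀ : 0 < r₀) (h₁ : r₀ < r₁) :
    ∃ C : ℝ, 0 < C ∧ ∀ ρp ρm ρt : ℝ,
      ρp ∈ Set.Icc r₀ r₁ → ρm ∈ Set.Icc r₀ r₁ → ρt ∈ Set.Icc r₀ r₁ →
      ρt ≠ ρp → ρt ≠ ρm → min ρp ρm ≤ ρt → ρt ≤ max ρp ρm →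
      |(ρt ^ γ - ρm ^ γ) / (ρt - ρm) - (ρt ^ γ - ρp ^ γ) / (ρt - ρp)
          - γ * (γ - 1) / 2 * ρp ^ (γ - 2) * (ρm - ρp)|
        ≤ C * |ρm - ρp| ^ 2 := by
  set K : ℝ := |γ - 2| * max (r₀ ^ (γ - 3)) (r₁ ^ (γ - 3)) with hK
  set L : ℝ := γ * (γ - 1) * K with hL
  have hKnn : 0 ≤ K := by positivity
  have hLnn : 0 ≤ L := by
    rw [hL]; exact mul_nonneg (by nlinarith) hKnn
  refine ⟨2 * L + 1, by linarith, ?_⟩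
  intro ρp ρm ρt hρp hρm hρt hne_p hne_m hmin hmax
  set D : ℝ := |ρm - ρp| with hD
  have hDnn : 0 ≤ D := abs_nonneg _
  -- ρt is in the unordered interval between ρp and ρm
  have hρt_mem : ρt ∈ Set.uIcc ρp ρm := by
    rcases le_total ρp ρm with h | h
    · rw [Set.uIcc_of_le h]
      exact ⟨by simpa [min_eq_left h] using hmin, by simpa [max_eq_right h] using hmax⟩
    · rw [Set.uIcc_of_ge h]
      exact ⟨by simpa [min_eq_right h] using hmin, by simpa [max_eq_left h] using hmax⟩
  -- the quadratic comparison function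
  set φ : ℝ → ℝ := fun x => x ^ γ - γ * ρp ^ (γ - 1) * x
    - γ * (γ - 1) / 2 * ρp ^ (γ - 2) * (x - ρp) ^ 2 with hφ
  -- mean-value bound for φ on uIcc a ρt, given all points there are within D of ρp
  have key : ∀ a : ℝ, a ∈ Set.Icc r₀ r₁ → (∀ x ∈ Set.uIcc a ρt, |x - ρp| ≤ D) →
      |φ ρt - φ a| ≤ L * D ^ 2 * |ρt - a| := by
    intro a ha hDist
    have hsub : Set.uIcc a ρt ⊆ Set.Icc r₀ r₁ := Set.uIcc_subset_Icc ha hρt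
    have hconv : Convex ℝ (Set.uIcc a ρt) := convex_uIcc _ _
    have hmv := hconv.norm_image_sub_le_of_norm_hasDerivWithin_le
      (f := φ)
      (f' := fun x => γ * x ^ (γ - 1) - γ * ρp ^ (γ - 1)
        - γ * (γ - 1) * ρp ^ (γ - 2) * (x - ρp))
      (C := L * D ^ 2)
      (fun x hx => by
        have h1 : HasDerivAt (fun t : ℝ => t ^ γ) (γ * x ^ (γ - 1)) x :=
          Real.hasDerivAt_rpow_const (Or.inr hγ.le)
        have h2 : HasDerivAt (fun t : ℝ => γ * ρp ^ (γ - 1) * t) (γ * ρp ^ (γ - 1)) x := by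
          simpa using (hasDerivAt_id x).const_mul (γ * ρp ^ (γ - 1))
        have h3 : HasDerivAt (fun t : ℝ => γ * (γ - 1) / 2 * ρp ^ (γ - 2) * (t - ρp) ^ 2)
            (γ * (γ - 1) / 2 * ρp ^ (γ - 2) * (2 * (x - ρp))) x := by
          have : HasDerivAt (fun t : ℝ => (t - ρp) ^ 2) (2 * (x - ρp)) x := by
            simpa using ((hasDerivAt_id x).sub_const ρp).fun_pow 2
          exact this.const_mul _
        exact (((h1.sub h2).sub h3).congr_deriv (by ring)).hasDerivWithinAt)
      (fun x hx => by
        have hx' : x ∈ Set.Icc r₀ r₁ := hsub hx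
        have ht1 := taylor1 hγ h₀ hρp hx'
        have h2 : (x - ρp) ^ 2 ≤ D ^ 2 := by
          have := hDist x hx
          nlinarith [abs_nonneg (x - ρp), sq_abs (x - ρp), abs_le.mp (le_refl |x - ρp|)]
        rw [Real.norm_eq_abs]
        calc |γ * x ^ (γ - 1) - γ * ρp ^ (γ - 1) - γ * (γ - 1) * ρp ^ (γ - 2) * (x - ρp)|
            ≤ L * (x - ρp) ^ 2 := ht1
          _ ≤ L * D ^ 2 := mul_le_mul_of_nonneg_left h2 hLnn)
      Set.left_mem_uIcc Set.right_mem_uIcc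
    simpa [Real.norm_eq_abs] using hmv
  -- distance facts
  have habs_tp : |ρt - ρp| ≤ D := abs_sub_le_of_mem_uIcc' hρt_mem
  have habs_tm : |ρt - ρm| ≤ D := by
    have : ρt ∈ Set.uIcc ρm ρp := Set.uIcc_comm ρp ρm ▸ hρt_mem
    simpa [hD, abs_sub_comm ρm ρp] using abs_sub_le_of_mem_uIcc' this
  have hA := key ρm hρm (fun x hx => by
    have hx' : x ∈ Set.uIcc ρm ρp :=
      Set.uIcc_subset_uIcc Set.left_mem_uIcc (Set.uIcc_comm ρp ρm ▸ hρt_mem) hx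
    have := abs_sub_le_of_mem_uIcc' (Set.uIcc_comm ρm ρp ▸ hx' : x ∈ Set.uIcc ρp ρm)
    simpa [hD] using this)
  have hB := key ρp hρp (fun x hx => by
    have := abs_sub_le_of_mem_uIcc' hx
    calc |x - ρp| ≤ |ρt - ρp| := this
      _ ≤ D := habs_tp)
  -- algebraic identity
  have htm : ρt - ρm ≠ 0 := sub_ne_zero.mpr hne_m
  have htp : ρt - ρp ≠ 0 := sub_ne_zero.mpr hne_p
  have hident : (ρt ^ γ - ρm ^ γ) / (ρt - ρm) - (ρt ^ γ - ρp ^ γ) / (ρt - ρp)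
      - γ * (γ - 1) / 2 * ρp ^ (γ - 2) * (ρm - ρp)
      = (φ ρt - φ ρm) / (ρt - ρm) - (φ ρt - φ ρp) / (ρt - ρp) := by
    field_simp [hφ]
    ring
  rw [hident]
  have e1 : |(φ ρt - φ ρm) / (ρt - ρm)| ≤ L * D ^ 2 := by
    rw [abs_div]
    rw [div_le_iff₀ (abs_pos.mpr htm)]
    simpa [abs_sub_comm] using hA
  have e2 : |(φ ρt - φ ρp) / (ρt - ρp)| ≤ L * D ^ 2 := by
    rw [abs_div]
    rw [div_le_iff₀ (abs_pos.mpr htp)]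
    simpa [abs_sub_comm] using hB
  calc |(φ ρt - φ ρm) / (ρt - ρm) - (φ ρt - φ ρp) / (ρt - ρp)|
      ≤ |(φ ρt - φ ρm) / (ρt - ρm)| + |(φ ρt - φ ρp) / (ρt - ρp)| := abs_sub _ _
    _ ≤ L * D ^ 2 + L * D ^ 2 := add_le_add e1 e2
    _ ≤ (2 * L + 1) * D ^ 2 := by nlinarith [sq_nonneg D]
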